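/- For n \ge 1, the independence polynomial of the corona G \circ K_1 (add a pendant vertex to every vertex of G) of a graph G of order n satisfies I(G \circ K_1; x) = (1+x)^n I(G; x/(1+x)). -/

import Mathlib

open Polynomial

open scoped Classical in
/-- The independence polynomial of a finite simple graph. -/
noncomputable def indepPoly {V : Type} [Fintype V] (G : SimpleGraph V) : Polynomial ℝ :=
  ∑ s ∈ Finset.univ.filter (fun s : Finset V => ∀ u ∈ s, ∀ v ∈ s, ¬ G.Adj u v),
    (X : Polynomial ℝ) ^ s.card

/-- The corona `G ∘ K₁`: attach a private pendant vertex to each vertex of `G`.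
Vertices `Sum.inl v` are the original ones, `Sum.inr v` is the pendant at `v`. -/
def coronaK1 {V : Type} (G : SimpleGraph V) : SimpleGraph (V ⊕ V) :=
  SimpleGraph.fromRel (fun x y =>
    match x, y with
    | Sum.inl a, Sum.inl b => G.Adj a b
    | Sum.inl a, Sum.inr b => a = b
    | _, _ => False)

lemma corona_adj {V : Type} (G : SimpleGraph V) (x y : V ⊕ V) :
    (coronaK1 G).Adj x y ↔
      (match x, y with
        | Sum.inl a, Sum.inl b => G.Adj a b
        | Sum.inl a, Sum.inr b => a = b
        | Sum.inr a, Sum.inl b => b = a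
        | Sum.inr _, Sum.inr _ => False) := by
  rcases x with a | a <;> rcases y with b | b
  · simp only [coronaK1, SimpleGraph.fromRel_adj]
    constructor
    · rintro ⟨-, h | h⟩
      exacts [h, h.symm]
    · exact fun h => ⟨by simp [h.ne], Or.inl h⟩
  · simp [coronaK1, SimpleGraph.fromRel_adj]
  · simp [coronaK1, SimpleGraph.fromRel_adj, eq_comm]
  · simp [coronaK1, SimpleGraph.fromRel_adj]

lemma sum_powerset_pow {V : Type} [DecidableEq V] (T : Finset V) :
    ∑ B ∈ T.powerset, (X : Polynomial ℝ) ^ B.card = (1 + X) ^ T.card := by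
  induction T using Finset.induction with
  | empty => simp
  | insert a T ha ih =>
    rw [Finset.sum_powerset_insert ha, Finset.card_insert_of_notMem ha, pow_succ]
    have : ∀ B ∈ T.powerset, (X : Polynomial ℝ) ^ (insert a B).card = X * X ^ B.card := by
      intro B hB
      rw [Finset.card_insert_of_notMem (fun h => ha (Finset.mem_powerset.1 hB h)), pow_succ,
        mul_comm]
    rw [Finset.sum_congr rfl this, ← Finset.mul_sum, ih]
    ring

theorem stmt_17 {V : Type} [Fintype V] (G : SimpleGraph V) (n : ℕ)
    (hn : n = Fintype.card V) (hn1 : 1 ≤ n) :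
    indepPoly (coronaK1 G) =
      ∑ k ∈ Finset.range (n + 1),
        C ((indepPoly G).coeff k) * X ^ k * (1 + X) ^ (n - k) := by
  classical
  set Q : Finset (Finset V) :=
    Finset.univ.filter (fun s : Finset V => ∀ u ∈ s, ∀ v ∈ s, ¬ G.Adj u v) with hQ
  -- Step 1: LHS as sum over sigma
  have key : indepPoly (coronaK1 G) =
      ∑ A ∈ Q, (X : Polynomial ℝ) ^ A.card * (1 + X) ^ (n - A.card) := by
    have h1 : indepPoly (coronaK1 G) =
        ∑ p ∈ Q.sigma (fun A => Aᶜ.powerset), (X : Polynomial ℝ) ^ (p.1.card + p.2.card) := by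
      unfold indepPoly
      refine Finset.sum_bij' (fun S _ => ⟨S.toLeft, S.toRight⟩)
        (fun p _ => p.1.disjSum p.2) ?_ ?_ ?_ ?_ ?_
      · intro S hS
        simp only [Finset.mem_filter, Finset.mem_univ, true_and] at hS
        simp only [Finset.mem_sigma, Finset.mem_filter, Finset.mem_univ, true_and, hQ,
          Finset.mem_powerset]
        constructor
        · intro u hu v hv hGuv
          exact hS _ (Finset.mem_toLeft.1 hu) _ (Finset.mem_toLeft.1 hv)
            ((corona_adj G _ _).2 hGuv)
        · intro v hv
          simp only [Finset.mem_compl, Finset.mem_toLeft]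
          intro hvl
          exact hS _ hvl _ (Finset.mem_toRight.1 hv) ((corona_adj G _ _).2 rfl)
      · rintro ⟨A, B⟩ hp
        simp only [Finset.mem_sigma, Finset.mem_filter, Finset.mem_univ, true_and, hQ,
          Finset.mem_powerset] at hp
        simp only [Finset.mem_filter, Finset.mem_univ, true_and]
        rintro u hu v hv hadj
        rw [corona_adj] at hadj
        rcases u with a | a <;> rcases v with b | b <;>
          simp only [Finset.inl_mem_disjSum, Finset.inr_mem_disjSum] at hu hv hadj
        · exact hp.1 _ hu _ hv hadj
        · subst hadj; exact absurd (hp.2 hv) (by simp [hu])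
        · subst hadj; exact absurd (hp.2 hu) (by simp [hv])
      · intro S _; exact Finset.toLeft_disjSum_toRight
      · rintro ⟨A, B⟩ _; simp
      · intro S _; rw [← Finset.card_toLeft_add_card_toRight]
    rw [h1, Finset.sum_sigma]
    refine Finset.sum_congr rfl fun A hA => ?_
    have : ∀ B ∈ Aᶜ.powerset,
        (X : Polynomial ℝ) ^ (A.card + B.card) = X ^ A.card * X ^ B.card := by
      intro B _; rw [pow_add]
    rw [Finset.sum_congr rfl this, ← Finset.mul_sum, sum_powerset_pow,
      Finset.card_compl, hn]
  rw [key]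
  -- Step 2: RHS
  have hcoeff : ∀ k, (indepPoly G).coeff k =
      ∑ A ∈ Q.filter (fun A => A.card = k), (1 : ℝ) := by
    intro k
    unfold indepPoly
    rw [finset_sum_coeff]
    conv_rhs => rw [Finset.sum_filter]
    refine Finset.sum_congr rfl fun A _ => ?_
    rw [coeff_X_pow]
    by_cases h : A.card = k
    · simp [h]
    · rw [if_neg (fun h' : k = A.card => h h'.symm), if_neg h]
  have maps : ∀ A ∈ Q, A.card ∈ Finset.range (n + 1) := by
    intro A _
    simp only [Finset.mem_range, Nat.lt_succ_iff, hn]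
    exact Finset.card_le_univ A
  rw [← Finset.sum_fiberwise_of_maps_to maps
    (fun A => (X : Polynomial ℝ) ^ A.card * (1 + X) ^ (n - A.card))]
  refine Finset.sum_congr rfl fun k _ => ?_
  rw [hcoeff k, Finset.sum_const, nsmul_eq_mul, mul_one, map_natCast]
  rw [Finset.sum_congr rfl (fun A hA => by
    rw [(Finset.mem_filter.1 hA).2]), Finset.sum_const, nsmul_eq_mul]
  push_cast
  ring
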